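/- Let N ≥ 1 be an integer, let Ĝ, G ∈ ℝ^{N×N}, ĝ, g ∈ ℝ^N, and let β ∈ ℝ^N satisfy Gβ = g. Suppose λ > 0 satisfies |β|_1 · |Ĝ − G|_∞ + |ĝ − g|_∞ ≤ λ. Then: (a) β is feasible, i.e. |Ĝβ − ĝ|_∞ ≤ λ; and (b) any β̂ ∈ ℝ^N that minimizes |b|_1 over the set {b ∈ ℝ^N : |Ĝb − ĝ|_∞ ≤ λ} satisfies |β̂|_1 ≤ |β|_1 and |G(β̂ − β)|_∞ ≤ 2λ. -/

import Mathlib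

open Matrix

noncomputable section

/-- The deterministic core of Proposition H.2 of the paper: if `Gβ = g` and the
estimation errors satisfy `|β|₁ |Ĝ − G|_∞ + |ĝ − g|_∞ ≤ λ`, then `β` is feasible
for the ℓ1-regularised Yule–Walker (Dantzig-selector) problem, and any minimizer
`β̂` of the ℓ1 norm over the feasible set satisfies `|β̂|₁ ≤ |β|₁` and
`|G(β̂ − β)|_∞ ≤ 2λ`. -/
theorem stmt8 (N : ℕ) (hN : 1 ≤ N) (Ghat G : Matrix (Fin N) (Fin N) ℝ)
    (ghat g β : Fin N → ℝ) (hβ : G *ᵥ β = g) (lam : ℝ) (hlam : 0 < lam)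
    (hcond : (∑ i, |β i|) * (⨆ i, ⨆ j, |Ghat i j - G i j|) + (⨆ i, |ghat i - g i|) ≤ lam) :
    (⨆ i, |(Ghat *ᵥ β - ghat) i|) ≤ lam ∧
    ∀ βhat : Fin N → ℝ,
      (⨆ i, |(Ghat *ᵥ βhat - ghat) i|) ≤ lam →
      (∀ b : Fin N → ℝ, (⨆ i, |(Ghat *ᵥ b - ghat) i|) ≤ lam → ∑ i, |βhat i| ≤ ∑ i, |b i|) →
      (∑ i, |βhat i| ≤ ∑ i, |β i| ∧ (⨆ i, |(G *ᵥ (βhat - β)) i|) ≤ 2 * lam) := by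
  haveI : Nonempty (Fin N) := Fin.pos_iff_nonempty.mp hN
  set MG := ⨆ i, ⨆ j, |Ghat i j - G i j| with hMGdef
  set Mg := ⨆ i, |ghat i - g i| with hMgdef
  have hMGle : ∀ i j, |Ghat i j - G i j| ≤ MG := by
    intro i j
    refine le_trans (le_ciSup (f := fun j => |Ghat i j - G i j|)
        (Set.Finite.bddAbove (Set.finite_range _)) j)
      (le_ciSup (f := fun i => ⨆ j, |Ghat i j - G i j|)
        (Set.Finite.bddAbove (Set.finite_range _)) i)
  have hMgle : ∀ i, |ghat i - g i| ≤ Mg := fun i =>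
    le_ciSup (f := fun i => |ghat i - g i|) (Set.Finite.bddAbove (Set.finite_range _)) i
  have hdiff : ∀ (b : Fin N → ℝ) (i : Fin N),
      |∑ j, (Ghat i j - G i j) * b j| ≤ (∑ j, |b j|) * MG := by
    intro b i
    calc |∑ j, (Ghat i j - G i j) * b j| ≤ ∑ j, |(Ghat i j - G i j) * b j| :=
          Finset.abs_sum_le_sum_abs _ _
      _ ≤ ∑ j, MG * |b j| := by
          refine Finset.sum_le_sum fun j _ => ?_
          rw [abs_mul]
          exact mul_le_mul_of_nonneg_right (hMGle i j) (abs_nonneg _)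
      _ = (∑ j, |b j|) * MG := by rw [← Finset.mul_sum, mul_comm]
  -- feasibility of β
  have hfeasβ : ∀ i, |(Ghat *ᵥ β - ghat) i| ≤ lam := by
    intro i
    have hrw : (Ghat *ᵥ β - ghat) i = (∑ j, (Ghat i j - G i j) * β j) + (g i - ghat i) := by
      have hg : ∑ j, G i j * β j = g i := congrFun hβ i
      have hs : ∑ j, (Ghat i j - G i j) * β j
          = ∑ j, Ghat i j * β j - ∑ j, G i j * β j := by
        rw [← Finset.sum_sub_distrib]
        exact Finset.sum_congr rfl fun j _ => by ring
      simp only [Pi.sub_apply, mulVec, dotProduct]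
      rw [hs, hg]; ring
    rw [hrw]
    calc |(∑ j, (Ghat i j - G i j) * β j) + (g i - ghat i)|
        ≤ |∑ j, (Ghat i j - G i j) * β j| + |g i - ghat i| := abs_add_le _ _
      _ ≤ (∑ j, |β j|) * MG + Mg := by
          refine add_le_add (hdiff β i) ?_
          rw [abs_sub_comm]; exact hMgle i
      _ ≤ lam := hcond
  have part1 : (⨆ i, |(Ghat *ᵥ β - ghat) i|) ≤ lam := ciSup_le hfeasβ
  refine ⟨part1, fun βhat hfeas hmin => ?_⟩
  have hl1 : ∑ i, |βhat i| ≤ ∑ i, |β i| := hmin β part1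
  refine ⟨hl1, ciSup_le fun i => ?_⟩
  have hfi : |(Ghat *ᵥ βhat - ghat) i| ≤ lam :=
    le_trans (le_ciSup (f := fun i => |(Ghat *ᵥ βhat - ghat) i|) (Set.Finite.bddAbove (Set.finite_range _)) i) hfeas
  have hrw : (G *ᵥ (βhat - β)) i
      = (Ghat *ᵥ βhat - ghat) i - (∑ j, (Ghat i j - G i j) * βhat j) + (ghat i - g i) := by
    have hg : ∑ j, G i j * β j = g i := congrFun hβ i
    have hs : ∑ j, (Ghat i j - G i j) * βhat j
        = ∑ j, Ghat i j * βhat j - ∑ j, G i j * βhat j := by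
      rw [← Finset.sum_sub_distrib]
      exact Finset.sum_congr rfl fun j _ => by ring
    have hs2 : ∑ j, G i j * (βhat j - β j)
        = ∑ j, G i j * βhat j - ∑ j, G i j * β j := by
      rw [← Finset.sum_sub_distrib]
      exact Finset.sum_congr rfl fun j _ => by ring
    simp only [Pi.sub_apply, mulVec, dotProduct]
    rw [hs2, hs, hg]; ring
  rw [hrw]
  calc |(Ghat *ᵥ βhat - ghat) i - (∑ j, (Ghat i j - G i j) * βhat j) + (ghat i - g i)|
      ≤ |(Ghat *ᵥ βhat - ghat) i - (∑ j, (Ghat i j - G i j) * βhat j)| + |ghat i - g i| :=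
        abs_add_le _ _
    _ ≤ |(Ghat *ᵥ βhat - ghat) i| + |∑ j, (Ghat i j - G i j) * βhat j| + |ghat i - g i| := by
        exact add_le_add_left (abs_sub _ _) _
    _ ≤ lam + (∑ j, |βhat j|) * MG + Mg := by
        refine add_le_add (add_le_add hfi (hdiff βhat i)) (hMgle i)
    _ ≤ lam + (∑ j, |β j|) * MG + Mg := by
        have hMGnn : 0 ≤ MG := le_trans (abs_nonneg _) (hMGle (Classical.arbitrary _) (Classical.arbitrary _))
        gcongr
    _ ≤ lam + lam := by linarith
    _ = 2 * lam := by ring
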